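/- An m-monoid M is degenerate if and only if M is both a cm-monoid and an am-monoid. -/
import Mathlib


universe u

open scoped Classical

/-- A finite permutation of ω: an element of S_ω, i.e. a permutation moving
only finitely many points. -/
def FinPerm (σ : Equiv.Perm ℕ) : Prop := {n : ℕ | σ n ≠ n}.Finite

/-- The raw operations of a merge algebra: the binary merges `⋆_n` and the
actions `σ̄` of (finite) permutations. -/
structure MergeOps (A : Type u) where
  star : ℕ → A → A → A
  bar : Equiv.Perm ℕ → A → A

namespace MergeOps

variable {A : Type u}

/-- `chain g k = ((g 0 ⋆_1 g 1) ⋆_2 g 2) … ⋆_k (g k)`. -/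
def chain (M : MergeOps A) (g : ℕ → A) : ℕ → A
  | 0 => g 0
  | i + 1 => M.star (i + 1) (M.chain g i) (g (i + 1))

/-- `chainStar g k y = ((…(g 0 ⋆_1 g 1) ⋆_2 …) ⋆_{k-1} g (k-1)) ⋆_k y`. -/
def chainStar (M : MergeOps A) (g : ℕ → A) (k : ℕ) (y : A) : A :=
  match k with
  | 0 => y
  | k + 1 => M.star (k + 1) (M.chain g k) y

/-- The `n`-coordinate of `x` relative to the coordinator `pt`:
`x[n] = τ̄^n_0(x) ⋆_1 pt`. -/
def coord (M : MergeOps A) (pt x : A) (n : ℕ) : A :=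
  M.star 1 (M.bar (Equiv.swap 0 n) x) pt

end MergeOps

/-- A merge algebra: operations `⋆_n` and `σ̄` satisfying axioms (B1)–(B7). -/
structure MergeAlgebra (A : Type u) extends MergeOps A where
  /-- (B1) each `⋆_n` is associative -/
  star_assoc : ∀ (n : ℕ) (x y z : A), star n (star n x y) z = star n x (star n y z)
  /-- (B1) each `⋆_n` is idempotent -/
  star_idem : ∀ (n : ℕ) (x : A), star n x x = x
  /-- (B2) -/
  star_zero : ∀ x y : A, star 0 x y = y
  /-- (B3), first part (k ≥ n) -/
  B3a : ∀ {n k : ℕ}, n ≤ k → ∀ x y z : A, star n (star k x y) z = star n x z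
  /-- (B3), second part (k ≥ n) -/
  B3b : ∀ {n k : ℕ}, n ≤ k → ∀ x y z : A, star k x (star n y z) = star k x z
  /-- (B4) (k < n) -/
  B4 : ∀ {n k : ℕ}, k < n → ∀ x y z : A, star n (star k x y) z = star k x (star n y z)
  /-- (B5) `σ̄(τ̄(x)) = (τ∘σ)‾(x)` -/
  B5 : ∀ σ τ : Equiv.Perm ℕ, FinPerm σ → FinPerm τ → ∀ x : A,
      bar σ (bar τ x) = bar (τ * σ) x
  /-- (B5) `ῑ(x) = x` -/
  bar_id : ∀ x : A, bar 1 x = x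
  /-- (B6): for `n ≤ k` and `σ` a permutation of `k`, with `f i = x` iff `σ i < n`:
  `σ̄(x ⋆_n y) = ((…(σ̄(f 0) ⋆_1 σ̄(f 1)) ⋆_2 …) ⋆_{k-1} σ̄(f (k-1))) ⋆_k y`. -/
  B6 : ∀ {n k : ℕ}, n ≤ k → ∀ σ : Equiv.Perm ℕ, (∀ i, k ≤ i → σ i = i) →
      ∀ x y : A, bar σ (star n x y) =
        toMergeOps.chainStar (fun i => bar σ (if σ i < n then x else y)) k y
  /-- (B7) -/
  B7 : ∀ {m n : ℕ} (σ τ : Equiv.Perm ℕ), FinPerm σ → FinPerm τ →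
      (∀ i, m ≤ i → i < n → σ i = τ i) →
      ∀ x y z : A, star n (star m z (bar σ x)) y = star n (star m z (bar τ x)) y

/-- An m-monoid: a monoid structure together with a merge algebra structure on
the same carrier, satisfying right distributivity (L1). -/
structure MMonoid (A : Type u) extends MergeAlgebra A where
  mul : A → A → A
  one : A
  mul_assoc : ∀ x y z : A, mul (mul x y) z = mul x (mul y z)
  one_mul : ∀ x : A, mul one x = x
  mul_one : ∀ x : A, mul x one = x
  /-- (L1) right distributivity -/
  L1 : ∀ (n : ℕ) (x y z : A), mul (star n x y) z = star n (mul x z) (mul y z)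

namespace MMonoid

variable {A : Type u} (M : MMonoid A)

/-- A cm-monoid is an m-monoid satisfying (L2): `σ̄(x)·y = σ̄(x·y)`. -/
def IsCM : Prop :=
  ∀ σ : Equiv.Perm ℕ, FinPerm σ → ∀ x y : A, M.mul (M.bar σ x) y = M.bar σ (M.mul x y)

/-- An am-monoid is an m-monoid satisfying (L3): `σ̄(x·y) = σ̄(x)·σ̄(y)`. -/
def IsAM : Prop :=
  ∀ σ : Equiv.Perm ℕ, FinPerm σ → ∀ x y : A, M.bar σ (M.mul x y) = M.mul (M.bar σ x) (M.bar σ y)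

/-- The `n`-coordinate `x[n] = τ̄^n_0(x) ⋆_1 1` (the coordinator is the unit). -/
def coord (x : A) (n : ℕ) : A := M.toMergeOps.coord M.one x n

/-- Extensionality: elements with the same coordinates are equal. -/
def Extensional : Prop := ∀ x y : A, (∀ n : ℕ, M.coord x n = M.coord y n) → x = y

/-- An element has rank ≤ n iff `x ⋆_n 1 = x`; the m-monoid is finitely ranked
if every element has finite rank. -/
def FinitelyRanked : Prop := ∀ x : A, ∃ n : ℕ, M.star n x M.one = x

/-- A degenerate m-monoid. -/
def Degenerate : Prop :=
  (∀ σ : Equiv.Perm ℕ, FinPerm σ → ∀ x : A, M.bar σ x = x) ∧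
    (∀ (n : ℕ) (x y : A), M.star n x y = y)

/-- `a` is finite dimensional: for every `n` there is `m` with
`(a·(1 ⋆_m b ⋆_{m+k} 1)) ⋆_n a = a` for all `b` and `k`. -/
def FinDimEl (a : A) : Prop :=
  ∀ n : ℕ, ∃ m : ℕ, ∀ (b : A) (k : ℕ),
    M.star n (M.mul a (M.star (m + k) (M.star m M.one b) M.one)) a = a

/-- `a` is ω-finite dimensional: for every `n` there is `m` with
`(a·(1 ⋆_m b)) ⋆_n a = a` for all `b`. -/
def OmegaFinDimEl (a : A) : Prop :=
  ∀ n : ℕ, ∃ m : ℕ, ∀ b : A,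
    M.star n (M.mul a (M.star m M.one b)) a = a

/-- An m-monoid is finite dimensional if every element is. -/
def FinDim : Prop := ∀ a : A, M.FinDimEl a

/-- An m-monoid is ω-finite dimensional if every element is. -/
def OmegaFinDim : Prop := ∀ a : A, M.OmegaFinDimEl a

end MMonoid

lemma finPerm_swap (a b : ℕ) : FinPerm (Equiv.swap a b) := by
  apply Set.Finite.subset ((Set.finite_singleton b).insert a)
  intro n hn
  by_contra hmem
  simp only [Set.mem_insert_iff, Set.mem_singleton_iff, not_or] at hmem
  exact hn (Equiv.swap_apply_of_ne_of_ne hmem.1 hmem.2)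

lemma finPerm_inv (σ : Equiv.Perm ℕ) (h : FinPerm σ) : FinPerm σ⁻¹ := by
  have : {n : ℕ | σ⁻¹ n ≠ n} = {n : ℕ | σ n ≠ n} := by
    ext n
    simp only [Set.mem_setOf_eq, ne_eq, not_iff_not]
    constructor
    · intro h'; conv_lhs => rw [← h']
      simp
    · intro h'; conv_lhs => rw [← h']
      simp
  unfold FinPerm
  rw [this]; exact h

/-- STATEMENT 12: an m-monoid is degenerate iff it is both a cm-monoid and an
am-monoid. -/
theorem degenerate_iff_cm_and_am {A : Type u} (M : MMonoid A) :
    M.Degenerate ↔ (M.IsCM ∧ M.IsAM) := by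
  constructor
  · rintro ⟨hb, _⟩
    exact ⟨fun σ hσ x y => by rw [hb σ hσ, hb σ hσ],
           fun σ hσ x y => by rw [hb σ hσ, hb σ hσ, hb σ hσ]⟩
  · rintro ⟨hcm, ham⟩
    -- First: all bars are trivial.
    have hbar : ∀ σ : Equiv.Perm ℕ, FinPerm σ → ∀ x : A, M.bar σ x = x := by
      intro σ hσ x
      have h1 : ∀ y : A, M.mul (M.bar σ M.one) y = M.bar σ y := fun y => by
        rw [hcm σ hσ, M.one_mul]
      have h1' : ∀ y : A, M.mul (M.bar σ⁻¹ M.one) y = M.bar σ⁻¹ y := fun y => by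
        rw [hcm σ⁻¹ (finPerm_inv σ hσ), M.one_mul]
      have h2 : ∀ y : A, M.bar σ y = M.mul (M.bar σ M.one) (M.mul (M.bar σ M.one) y) := by
        intro y
        have := ham σ hσ M.one y
        rw [M.one_mul] at this
        conv at this => rhs; rw [← h1 y]
        exact this
      have hinv : ∀ z : A, M.mul (M.bar σ⁻¹ M.one) (M.mul (M.bar σ M.one) z) = z := by
        intro z
        rw [h1, h1', M.B5 σ⁻¹ σ (finPerm_inv σ hσ) hσ, mul_inv_cancel, M.bar_id]
      have step : M.mul (M.bar σ M.one) x
          = M.mul (M.bar σ M.one) (M.mul (M.bar σ M.one) x) := (h1 x).trans (h2 x)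
      have hx : M.mul (M.bar σ M.one) x = x := by
        calc M.mul (M.bar σ M.one) x
            = M.mul (M.bar σ⁻¹ M.one)
                (M.mul (M.bar σ M.one) (M.mul (M.bar σ M.one) x)) :=
              (hinv (M.mul (M.bar σ M.one) x)).symm
          _ = M.mul (M.bar σ⁻¹ M.one) (M.mul (M.bar σ M.one) x) := by rw [← step]
          _ = x := hinv x
      rw [← h1, hx]
    -- Second: all stars are trivial.
    have hstar : ∀ p : ℕ, ∀ x y : A, M.star (p + 1) x y = y := by
      intro p
      induction p using Nat.strong_induction_on with
      | _ p IH =>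
      intro x y
      set σ := Equiv.swap p (p + 1) with hσdef
      have hσfin : FinPerm σ := finPerm_swap p (p + 1)
      have hfix : ∀ i, p + 2 ≤ i → σ i = i := by
        intro i hi
        apply Equiv.swap_apply_of_ne_of_ne <;> omega
      have hσp : σ p = p + 1 := Equiv.swap_apply_left p (p + 1)
      have hσp1 : σ (p + 1) = p := Equiv.swap_apply_right p (p + 1)
      have hb6 := M.B6 (show p + 1 ≤ p + 2 by omega) σ hfix x y
      set g : ℕ → A := fun i => M.bar σ (if σ i < p + 1 then x else y) with hg
      have hgp : g p = y := by
        rw [hg]; simp only [hσp]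
        rw [if_neg (by omega), hbar σ hσfin]
      have hgp1 : g (p + 1) = x := by
        rw [hg]; simp only [hσp1]
        rw [if_pos (by omega), hbar σ hσfin]
      have hchain : M.toMergeOps.chain g p = y := by
        cases p with
        | zero => simpa [MergeOps.chain] using hgp
        | succ q =>
          show M.star (q + 1) (M.toMergeOps.chain g q) (g (q + 1)) = y
          rw [hgp, IH q (by omega)]
      have hR : M.star (p + 1) x y = M.star (p + 2) (M.star (p + 1) y x) y := by
        rw [hbar σ hσfin] at hb6
        rw [hb6]
        show M.star (p + 2) (M.toMergeOps.chain g (p + 1)) y = _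
        have : M.toMergeOps.chain g (p + 1) = M.star (p + 1) y x := by
          show M.star (p + 1) (M.toMergeOps.chain g p) (g (p + 1)) = _
          rw [hchain, hgp1]
        rw [this]
      calc M.star (p + 1) x y
          = M.star (p + 1) (M.star (p + 1) x y) y := (M.B3a le_rfl x y y).symm
        _ = M.star (p + 1) (M.star (p + 2) (M.star (p + 1) y x) y) y := by rw [← hR]
        _ = M.star (p + 1) (M.star (p + 1) y x) y :=
            M.B3a (Nat.le_succ (p + 1)) (M.star (p + 1) y x) y y
        _ = M.star (p + 1) y y := M.B3a le_rfl y x y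
        _ = y := M.star_idem (p + 1) y
    refine ⟨hbar, fun n x y => ?_⟩
    cases n with
    | zero => exact M.star_zero x y
    | succ p => exact hstar p x y
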